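/- Let m, n be positive integers, r = min(m,n), Ω ⊆ {1,…,m}×{1,…,n}, X a real m×n matrix, σ > 0 and λ > 0. Suppose Z† minimizes F(Z) := (1/(2σ²))·Σ_{(i,j)∈Ω}(X_{ij} − Z_{ij})² + λ‖Z‖_* over all real m×n matrices Z. Then there exist d† ∈ ℝ^r with d†_k ≥ 0 and vectors α†_k ∈ ℝ^m, β†_k ∈ ℝ^n with ‖α†_k‖₂ ≤ 1 and ‖β†_k‖₂ ≤ 1 for all k, such that Z† = Σ_{k=1}^r d†_k α†_k (β†_k)ᵀ and (d†, α†, β†) minimizes G(d,α,β) := (1/(2σ²))·Σ_{(i,j)∈Ω}(X_{ij} − (Σ_{k=1}^r d_k α_k β_kᵀ)_{ij})² + λ·Σ_{k=1}^r d_k over all feasible tuples. (Theorem 1, transfer of optimal solutions from P1 to P2.) -/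

import Mathlib

open scoped BigOperators

/-- The nuclear norm of a real matrix: the sum of the square roots of the
eigenvalues of `Zᵀ * Z` (i.e. the sum of the singular values of `Z`). -/
noncomputable def nuclearNorm {m n : ℕ} (Z : Matrix (Fin m) (Fin n) ℝ) : ℝ :=
  ∑ j, Real.sqrt ((show (Z.transpose * Z).IsHermitian by
    simpa [Matrix.conjTranspose_eq_transpose_of_trivial] using
      Matrix.isHermitian_conjTranspose_mul_self Z).eigenvalues j)

/-- The Euclidean (ℓ²) norm of a vector in `ℝ^m`. -/
noncomputable def l2norm {m : ℕ} (x : Fin m → ℝ) : ℝ := Real.sqrt (∑ i, x i ^ 2)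

/-- `∑ k, d k • (α k) (β k)ᵀ`, a sum of scaled rank-one matrices. -/
noncomputable def rankOneSum {m n r : ℕ} (d : Fin r → ℝ) (α : Fin r → Fin m → ℝ)
    (β : Fin r → Fin n → ℝ) : Matrix (Fin m) (Fin n) ℝ :=
  ∑ k, d k • Matrix.vecMulVec (α k) (β k)

section Auxiliary

open Matrix

lemma isHermitian_transpose_mul_self_real {m n : ℕ} (Z : Matrix (Fin m) (Fin n) ℝ) :
    (Z.transpose * Z).IsHermitian := by
  simpa [Matrix.conjTranspose_eq_transpose_of_trivial] using
    Matrix.isHermitian_conjTranspose_mul_self Z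

lemma dot_self_eq_zero' {m : ℕ} {x : Fin m → ℝ} (h : x ⬝ᵥ x = 0) : x = 0 := by
  funext i
  have := (Finset.sum_eq_zero_iff_of_nonneg
    (fun i _ => mul_self_nonneg (x i))).1 h i (Finset.mem_univ i)
  exact mul_self_eq_zero.1 this

lemma dot_self_eq_sum_sq {m : ℕ} (x : Fin m → ℝ) : x ⬝ᵥ x = ∑ i, x i ^ 2 :=
  Finset.sum_congr rfl fun i _ => (sq (x i)).symm

lemma l2norm_le_one_iff {m : ℕ} (x : Fin m → ℝ) : l2norm x ≤ 1 ↔ x ⬝ᵥ x ≤ 1 := by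
  rw [l2norm, Real.sqrt_le_one, dot_self_eq_sum_sq]

lemma dot_expand {m r : ℕ} (u : Fin r → Fin m → ℝ) (c : Fin r → ℝ) (α : Fin m → ℝ) :
    α ⬝ᵥ (fun i => ∑ j, c j * u j i) = ∑ j, c j * (α ⬝ᵥ u j) := by
  simp only [dotProduct, Finset.mul_sum]
  rw [Finset.sum_comm]
  exact Finset.sum_congr rfl fun j _ => Finset.sum_congr rfl fun i _ => by ring

lemma dot_expand2 {m r : ℕ} (u : Fin r → Fin m → ℝ) (c c' : Fin r → ℝ) :
    (fun i => ∑ j, c j * u j i) ⬝ᵥ (fun i => ∑ j, c' j * u j i)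
      = ∑ j', c' j' * ∑ j, c j * (u j ⬝ᵥ u j') := by
  rw [dot_expand]
  refine Finset.sum_congr rfl fun j' _ => ?_
  rw [dotProduct_comm, dot_expand]
  refine congrArg _ (Finset.sum_congr rfl fun j _ => ?_)
  rw [dotProduct_comm]

/-- Bessel-type inequality for a family that is orthogonal with norms at most `1`. -/
lemma bessel_aux {m r : ℕ} (u : Fin r → Fin m → ℝ) (g : Fin r → ℝ)
    (hg : ∀ j, g j ≤ 1)
    (horth : ∀ i j, u i ⬝ᵥ u j = if i = j then g j else 0)
    (α : Fin m → ℝ) :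
    ∑ j, (α ⬝ᵥ u j) ^ 2 ≤ α ⬝ᵥ α := by
  have hgnn : ∀ j, 0 ≤ g j := by
    intro j
    have h : u j ⬝ᵥ u j = g j := by simpa using horth j j
    rw [← h]
    exact Finset.sum_nonneg fun i _ => mul_self_nonneg _
  set c : Fin r → ℝ := fun j => α ⬝ᵥ u j with hc
  set w : Fin m → ℝ := fun i => ∑ j, c j * u j i with hw
  have haw : α ⬝ᵥ w = ∑ j, c j ^ 2 := by
    rw [hw, dot_expand]
    exact Finset.sum_congr rfl fun j _ => by rw [sq]
  have hww2 : w ⬝ᵥ w = ∑ j, c j ^ 2 * g j := by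
    rw [hw, dot_expand2]
    refine Finset.sum_congr rfl fun j' _ => ?_
    simp only [horth, mul_ite, mul_zero]
    rw [Finset.sum_ite_eq' Finset.univ j' (fun j => c j * g j')]
    simp [sq]; ring
  have hpos : 0 ≤ (fun i => α i - w i) ⬝ᵥ (fun i => α i - w i) :=
    Finset.sum_nonneg fun i _ => mul_self_nonneg _
  have hexp : (fun i => α i - w i) ⬝ᵥ (fun i => α i - w i)
      = α ⬝ᵥ α - 2 * (α ⬝ᵥ w) + w ⬝ᵥ w := by
    simp only [dotProduct]
    rw [Finset.mul_sum, ← Finset.sum_sub_distrib, ← Finset.sum_add_distrib]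
    exact Finset.sum_congr rfl fun i _ => by ring
  have hle : ∑ j, c j ^ 2 * g j ≤ ∑ j, c j ^ 2 :=
    Finset.sum_le_sum fun j _ => by nlinarith [sq_nonneg (c j), hg j, hgnn j]
  rw [hexp, haw, hww2] at hpos
  linarith

/-- Existence of a singular value decomposition. -/
lemma svd_exists {m n : ℕ} (Z : Matrix (Fin m) (Fin n) ℝ) :
    ∃ (s : Fin n → ℝ) (u : Fin n → Fin m → ℝ) (v : Fin n → Fin n → ℝ),
      (∀ j, s j = Real.sqrt ((isHermitian_transpose_mul_self_real Z).eigenvalues j)) ∧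
      (∀ i j, u i ⬝ᵥ u j = if i = j then (if s j = 0 then 0 else 1) else 0) ∧
      (∀ i j, v i ⬝ᵥ v j = if i = j then 1 else 0) ∧
      (∀ i i', ∑ j, v j i * v j i' = if i = i' then 1 else 0) ∧
      (∀ j, Z *ᵥ v j = s j • u j) := by
  set hA := isHermitian_transpose_mul_self_real Z with hhA
  set μ : Fin n → ℝ := hA.eigenvalues with hμdef
  set v : Fin n → Fin n → ℝ := fun j => ⇑(hA.eigenvectorBasis j) with hv
  set s : Fin n → ℝ := fun j => Real.sqrt (μ j) with hs
  set u : Fin n → Fin m → ℝ := fun j => if s j = 0 then 0 else (s j)⁻¹ • (Z *ᵥ v j) with hu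
  have hμnn : ∀ j, 0 ≤ μ j := fun j => Matrix.eigenvalues_conjTranspose_mul_self_nonneg Z j
  have f1 : ∀ j, (Zᴴ * Z) *ᵥ v j = μ j • v j := fun j => hA.mulVec_eigenvectorBasis j
  have f2 : ∀ i j, v i ⬝ᵥ v j = if i = j then 1 else 0 := by
    intro i j
    have := orthonormal_iff_ite.mp hA.eigenvectorBasis.orthonormal i j
    simp [PiLp.inner_apply, RCLike.inner_apply, dotProduct] at this
    rw [← this]
    exact Finset.sum_congr rfl fun x _ => mul_comm _ _
  have key : ∀ i j, (Z *ᵥ v i) ⬝ᵥ (Z *ᵥ v j) = μ j * (v i ⬝ᵥ v j) := by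
    intro i j
    have h1 : v i ⬝ᵥ ((Zᴴ * Z) *ᵥ v j) = (Z *ᵥ v i) ⬝ᵥ (Z *ᵥ v j) := by
      rw [Matrix.conjTranspose_eq_transpose_of_trivial, ← Matrix.mulVec_mulVec,
        Matrix.dotProduct_mulVec (v i) Zᵀ, Matrix.vecMul_transpose]
    rw [← h1, f1, dotProduct_smul, smul_eq_mul]
  have hsq : ∀ j, s j * s j = μ j := fun j => Real.mul_self_sqrt (hμnn j)
  have hZv0 : ∀ j, s j = 0 → Z *ᵥ v j = 0 := by
    intro j hj
    have hμ0 : μ j = 0 := by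
      have := hsq j; rw [hj] at this; linarith
    apply dot_self_eq_zero'
    rw [key j j, hμ0, zero_mul]
  have hsu : ∀ j, Z *ᵥ v j = s j • u j := by
    intro j
    by_cases h : s j = 0
    · rw [hu]; simp only [h, if_pos rfl, smul_zero, if_true]
      exact hZv0 j h
    · rw [hu]; simp only [h, if_neg h, ite_false]
      rw [smul_smul, mul_inv_cancel₀ h, one_smul]
  have f5 : ∀ i j, u i ⬝ᵥ u j = if i = j then (if s j = 0 then 0 else 1) else 0 := by
    intro i j
    by_cases hi : s i = 0
    · simp only [hu, hi, if_pos rfl, ite_true, zero_dotProduct]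
      by_cases hij : i = j
      · subst hij; simp [hi]
      · simp [hij]
    · by_cases hj : s j = 0
      · simp only [hu, hj, if_pos rfl, ite_true, dotProduct_zero]
        by_cases hij : i = j
        · subst hij; exact absurd hj hi
        · simp [hij]
      · simp only [hu, hi, hj, ite_false]
        rw [smul_dotProduct, dotProduct_smul, key i j, f2]
        by_cases hij : i = j
        · subst hij
          simp only [if_pos rfl, smul_eq_mul, mul_one]
          rw [← hsq i]
          field_simp
        · simp [hij]
  refine ⟨s, u, v, fun j => rfl, f5, f2, ?_, hsu⟩
  intro i i'
  have h1 : (hA.eigenvectorUnitary : Matrix (Fin n) (Fin n) ℝ) *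
      star (hA.eigenvectorUnitary : Matrix (Fin n) (Fin n) ℝ) = 1 :=
    Matrix.mem_unitaryGroup_iff.mp hA.eigenvectorUnitary.2
  have h2 := congrFun (congrFun h1 i) i'
  simpa [Matrix.mul_apply, Matrix.one_apply, Matrix.star_apply,
    Matrix.IsHermitian.eigenvectorUnitary_apply] using h2

lemma rankOneSum_apply {m n r : ℕ} (d : Fin r → ℝ) (α : Fin r → Fin m → ℝ)
    (β : Fin r → Fin n → ℝ) (i : Fin m) (l : Fin n) :
    rankOneSum d α β i l = ∑ k, d k * (α k i * β k l) := by
  simp [rankOneSum, Matrix.sum_apply, Matrix.vecMulVec_apply]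

lemma rankOneSum_mulVec {m n r : ℕ} (d : Fin r → ℝ) (α : Fin r → Fin m → ℝ)
    (β : Fin r → Fin n → ℝ) (x : Fin n → ℝ) (i : Fin m) :
    (rankOneSum d α β *ᵥ x) i = ∑ k, d k * (α k i * (β k ⬝ᵥ x)) := by
  simp only [Matrix.mulVec, dotProduct, rankOneSum_apply, Finset.sum_mul, Finset.mul_sum]
  rw [Finset.sum_comm]
  exact Finset.sum_congr rfl fun k _ => Finset.sum_congr rfl fun l _ => by ring

/-- The nuclear norm of a feasible rank-one sum is at most the sum of the weights. -/
lemma nuclearNorm_rankOneSum_le {m n r : ℕ} (d : Fin r → ℝ) (α : Fin r → Fin m → ℝ)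
    (β : Fin r → Fin n → ℝ) (hd : ∀ k, 0 ≤ d k)
    (hα : ∀ k, α k ⬝ᵥ α k ≤ 1) (hβ : ∀ k, β k ⬝ᵥ β k ≤ 1) :
    nuclearNorm (rankOneSum d α β) ≤ ∑ k, d k := by
  obtain ⟨s, u, v, hs, hu, hv, hvc, hsu⟩ := svd_exists (rankOneSum d α β)
  have hnn : nuclearNorm (rankOneSum d α β) = ∑ j, s j := by
    unfold nuclearNorm
    exact Finset.sum_congr rfl fun j _ => (hs j).symm
  have hsval : ∀ j, s j = u j ⬝ᵥ (rankOneSum d α β *ᵥ v j) := by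
    intro j
    rw [hsu j, dotProduct_smul, hu j j, smul_eq_mul]
    by_cases h : s j = 0
    · simp [h]
    · simp [h]
  have hexpand : ∀ j, u j ⬝ᵥ (rankOneSum d α β *ᵥ v j)
      = ∑ k, d k * ((α k ⬝ᵥ u j) * (v j ⬝ᵥ β k)) := by
    intro j
    have step : ∀ k, ∑ i, u j i * (d k * (α k i * (β k ⬝ᵥ v j)))
        = d k * ((α k ⬝ᵥ u j) * (v j ⬝ᵥ β k)) := by
      intro k
      rw [dotProduct_comm (v j) (β k)]
      generalize β k ⬝ᵥ v j = B
      simp only [dotProduct, Finset.sum_mul, Finset.mul_sum]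
      exact Finset.sum_congr rfl fun i _ => by ring
    calc u j ⬝ᵥ (rankOneSum d α β *ᵥ v j)
        = ∑ i, u j i * ∑ k, d k * (α k i * (β k ⬝ᵥ v j)) := by
          simp only [dotProduct, rankOneSum_mulVec]
      _ = ∑ k, ∑ i, u j i * (d k * (α k i * (β k ⬝ᵥ v j))) := by
          simp only [Finset.mul_sum]; rw [Finset.sum_comm]
      _ = ∑ k, d k * ((α k ⬝ᵥ u j) * (v j ⬝ᵥ β k)) := Finset.sum_congr rfl fun k _ => step k
  have hbound : ∀ k, ∑ j, (α k ⬝ᵥ u j) * (v j ⬝ᵥ β k) ≤ 1 := by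
    intro k
    have hCS := Finset.sum_mul_sq_le_sq_mul_sq Finset.univ
      (fun j => α k ⬝ᵥ u j) (fun j => v j ⬝ᵥ β k)
    have hb1 : ∑ j, (α k ⬝ᵥ u j) ^ 2 ≤ 1 := by
      refine le_trans (bessel_aux u (fun j => if s j = 0 then 0 else 1)
        (fun j => by split <;> norm_num) hu (α k)) (hα k)
    have hb2 : ∑ j, (v j ⬝ᵥ β k) ^ 2 ≤ 1 := by
      have : ∀ j, (v j ⬝ᵥ β k) ^ 2 = (β k ⬝ᵥ v j) ^ 2 := fun j => by rw [dotProduct_comm]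
      simp only [this]
      refine le_trans (bessel_aux v (fun _ => 1) (fun _ => le_refl 1) hv (β k)) (hβ k)
    have h1 : (∑ j, (α k ⬝ᵥ u j) * (v j ⬝ᵥ β k)) ^ 2 ≤ 1 := by
      calc (∑ j, (α k ⬝ᵥ u j) * (v j ⬝ᵥ β k)) ^ 2
          ≤ (∑ j, (α k ⬝ᵥ u j) ^ 2) * (∑ j, (v j ⬝ᵥ β k) ^ 2) := hCS
        _ ≤ 1 := by
            have h2 : 0 ≤ ∑ j, (α k ⬝ᵥ u j) ^ 2 := Finset.sum_nonneg fun j _ => sq_nonneg _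
            have h3 : 0 ≤ ∑ j, (v j ⬝ᵥ β k) ^ 2 := Finset.sum_nonneg fun j _ => sq_nonneg _
            nlinarith
    nlinarith [h1]
  calc nuclearNorm (rankOneSum d α β) = ∑ j, s j := hnn
    _ = ∑ j, ∑ k, d k * ((α k ⬝ᵥ u j) * (v j ⬝ᵥ β k)) := by
        refine Finset.sum_congr rfl fun j _ => ?_
        rw [hsval j, hexpand j]
    _ = ∑ k, d k * ∑ j, (α k ⬝ᵥ u j) * (v j ⬝ᵥ β k) := by
        rw [Finset.sum_comm]
        exact Finset.sum_congr rfl fun k _ => by rw [Finset.mul_sum]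
    _ ≤ ∑ k, d k * 1 := Finset.sum_le_sum fun k _ =>
        mul_le_mul_of_nonneg_left (hbound k) (hd k)
    _ = ∑ k, d k := by simp

lemma sum_dite_lt {M : Type*} [AddCommMonoid M] {c r : ℕ} (hc : c ≤ r) (g : Fin c → M) :
    ∑ k : Fin r, (if h : (k : ℕ) < c then g ⟨k, h⟩ else 0) = ∑ i : Fin c, g i := by
  set f : ℕ → M := fun k => if h : k < c then g ⟨k, h⟩ else 0 with hf
  calc ∑ k : Fin r, f ↑k = ∑ k ∈ Finset.range r, f k := Fin.sum_univ_eq_sum_range f r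
    _ = ∑ k ∈ Finset.range c, f k := (Finset.sum_subset
        (Finset.range_subset_range.mpr hc) fun x _ hx => dif_neg (by simpa using hx)).symm
    _ = ∑ i : Fin c, f ↑i := (Fin.sum_univ_eq_sum_range f c).symm
    _ = ∑ i : Fin c, g i := Finset.sum_congr rfl fun i _ => by
        simp only [hf, dif_pos i.2, Fin.eta]

/-- Any matrix admits a feasible rank-one decomposition with `r = min m n` terms whose
weights sum to the nuclear norm. -/
lemma decomp_exists {m n : ℕ} (r : ℕ) (hr : r = min m n) (Z : Matrix (Fin m) (Fin n) ℝ) :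
    ∃ (d : Fin r → ℝ) (α : Fin r → Fin m → ℝ) (β : Fin r → Fin n → ℝ),
      (∀ k, 0 ≤ d k) ∧ (∀ k, α k ⬝ᵥ α k ≤ 1) ∧ (∀ k, β k ⬝ᵥ β k ≤ 1) ∧
      Z = rankOneSum d α β ∧ ∑ k, d k = nuclearNorm Z := by
  classical
  obtain ⟨s, u, v, hs, hu, hv, hvc, hsu⟩ := svd_exists Z
  have hsnn : ∀ j, 0 ≤ s j := fun j => (hs j).symm ▸ Real.sqrt_nonneg _
  have hrep : Z = ∑ j, s j • Matrix.vecMulVec (u j) (v j) := by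
    funext i l
    have h1 : (∑ j, s j • Matrix.vecMulVec (u j) (v j)) i l
        = ∑ j, (s j • u j) i * v j l := by
      simp [Matrix.sum_apply, Matrix.vecMulVec_apply, mul_assoc]
    rw [h1]
    have h2 : ∀ j, (s j • u j) i * v j l = (Z *ᵥ v j) i * v j l := fun j => by rw [← hsu j]
    rw [Finset.sum_congr rfl fun j _ => h2 j]
    have h3 : ∀ j, (Z *ᵥ v j) i * v j l = ∑ t, Z i t * (v j t * v j l) := by
      intro j
      simp only [Matrix.mulVec, dotProduct, Finset.sum_mul]
      exact Finset.sum_congr rfl fun t _ => by ring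
    rw [Finset.sum_congr rfl fun j _ => h3 j, Finset.sum_comm]
    have h4 : ∀ t, ∑ j, Z i t * (v j t * v j l) = Z i t * (if t = l then 1 else 0) := by
      intro t
      rw [← Finset.mul_sum, hvc t l]
    rw [Finset.sum_congr rfl fun t _ => h4 t]
    simp
  set E : Finset (Fin n) := Finset.univ.filter (fun j => s j ≠ 0) with hE
  have hcard : E.card ≤ r := by
    have h0 : ∀ j, s j ≠ 0 ↔ (isHermitian_transpose_mul_self_real Z).eigenvalues j ≠ 0 := by
      intro j
      rw [hs j]
      constructor
      · intro h h'; exact h (by rw [h', Real.sqrt_zero])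
      · intro h h'; exact h ((Real.sqrt_eq_zero
          (Matrix.eigenvalues_conjTranspose_mul_self_nonneg Z j)).mp h')
    have hEeq : E = Finset.univ.filter
        (fun j => (isHermitian_transpose_mul_self_real Z).eigenvalues j ≠ 0) :=
      Finset.filter_congr fun j _ => by simpa using h0 j
    have h1 : E.card = Fintype.card
        {j // (isHermitian_transpose_mul_self_real Z).eigenvalues j ≠ 0} := by
      rw [Fintype.card_subtype, hEeq]
    have h2 : (Zᵀ * Z).rank = Z.rank := by
      rw [Matrix.rank_transpose_mul_self]
    have h3 := (isHermitian_transpose_mul_self_real Z).rank_eq_card_non_zero_eigs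
    have h4 : Z.rank ≤ m := Matrix.rank_le_height Z
    have h5 : Z.rank ≤ n := Matrix.rank_le_width Z
    omega
  set c := E.card with hc
  set e := E.orderEmbOfFin (rfl : E.card = c) with he
  have hsumE : ∀ (M : Type) (_ : AddCommMonoid M) (f : Fin n → M),
      ∑ i : Fin c, f (e i) = ∑ j ∈ E, f j := by
    intro M _ f
    rw [← Finset.sum_coe_sort E f]
    exact Fintype.sum_equiv (E.orderIsoOfFin rfl).toEquiv _ _
      (fun i => by rw [← Finset.coe_orderIsoOfFin_apply]; rfl)
  have hoffE : ∀ j, j ∉ E → s j = 0 := by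
    intro j hj
    by_contra h
    exact hj (by simp [hE, h])
  refine ⟨fun k => if h : (k : ℕ) < c then s (e ⟨k, h⟩) else 0,
    fun k => if h : (k : ℕ) < c then u (e ⟨k, h⟩) else 0,
    fun k => if h : (k : ℕ) < c then v (e ⟨k, h⟩) else 0, ?_, ?_, ?_, ?_, ?_⟩
  · intro k; dsimp only; split
    · exact hsnn _
    · exact le_refl 0
  · intro k; dsimp only; split
    · rename_i h
      rw [hu]
      by_cases h2 : s (e ⟨k, h⟩) = 0 <;> simp [h2]
    · rw [zero_dotProduct]; norm_num
  · intro k; dsimp only; split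
    · rw [hv]; simp
    · rw [zero_dotProduct]; norm_num
  · unfold rankOneSum
    have step1 : ∀ k : Fin r,
        (if h : (k : ℕ) < c then s (e ⟨k, h⟩) else 0) •
          Matrix.vecMulVec (if h : (k : ℕ) < c then u (e ⟨k, h⟩) else 0)
            (if h : (k : ℕ) < c then v (e ⟨k, h⟩) else 0)
        = if h : (k : ℕ) < c then
            s (e ⟨k, h⟩) • Matrix.vecMulVec (u (e ⟨k, h⟩)) (v (e ⟨k, h⟩)) else 0 := by
      intro k
      by_cases h : (k : ℕ) < c
      · simp only [dif_pos h]
      · simp only [dif_neg h, zero_smul]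
    rw [Finset.sum_congr rfl fun k _ => step1 k,
      sum_dite_lt hcard (fun i : Fin c => s (e i) • Matrix.vecMulVec (u (e i)) (v (e i)))]
    rw [hsumE _ _ (fun j => s j • Matrix.vecMulVec (u j) (v j))]
    rw [Finset.sum_subset (Finset.subset_univ E) (fun j _ hj => by rw [hoffE j hj, zero_smul])]
    exact hrep
  · rw [sum_dite_lt hcard (fun i : Fin c => s (e i)), hsumE _ _ s,
      Finset.sum_subset (Finset.subset_univ E) (fun j _ hj => hoffE j hj)]
    unfold nuclearNorm
    exact Finset.sum_congr rfl fun j _ => hs j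

end Auxiliary

theorem optimal_solution_transfer_P1_to_P2
    (m n : ℕ) (hm : 0 < m) (hn : 0 < n) (r : ℕ) (hr : r = min m n)
    (Ω : Finset (Fin m × Fin n)) (X : Matrix (Fin m) (Fin n) ℝ)
    (σ lam : ℝ) (hσ : 0 < σ) (hlam : 0 < lam)
    (F : Matrix (Fin m) (Fin n) ℝ → ℝ)
    (hF : ∀ Z, F Z = (1 / (2 * σ ^ 2)) * ∑ p ∈ Ω, (X p.1 p.2 - Z p.1 p.2) ^ 2
        + lam * nuclearNorm Z)
    (G : (Fin r → ℝ) → (Fin r → Fin m → ℝ) → (Fin r → Fin n → ℝ) → ℝ)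
    (hG : ∀ d α β, G d α β =
        (1 / (2 * σ ^ 2)) * ∑ p ∈ Ω, (X p.1 p.2 - rankOneSum d α β p.1 p.2) ^ 2
        + lam * ∑ k, d k)
    (Zdag : Matrix (Fin m) (Fin n) ℝ)
    (hmin : ∀ Z : Matrix (Fin m) (Fin n) ℝ, F Zdag ≤ F Z) :
    ∃ (ddag : Fin r → ℝ) (αdag : Fin r → Fin m → ℝ) (βdag : Fin r → Fin n → ℝ),
      (∀ k, 0 ≤ ddag k) ∧ (∀ k, l2norm (αdag k) ≤ 1) ∧ (∀ k, l2norm (βdag k) ≤ 1) ∧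
      Zdag = rankOneSum ddag αdag βdag ∧
      (∀ (d : Fin r → ℝ) (α : Fin r → Fin m → ℝ) (β : Fin r → Fin n → ℝ),
        (∀ k, 0 ≤ d k) → (∀ k, l2norm (α k) ≤ 1) → (∀ k, l2norm (β k) ≤ 1) →
        G ddag αdag βdag ≤ G d α β) := by
  obtain ⟨d0, α0, β0, hd0, hα0, hβ0, hZeq, hsum⟩ := decomp_exists r hr Zdag
  refine ⟨d0, α0, β0, hd0, fun k => (l2norm_le_one_iff (α0 k)).mpr (hα0 k),
    fun k => (l2norm_le_one_iff (β0 k)).mpr (hβ0 k), hZeq, ?_⟩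
  intro d α β hd hα hβ
  have hNle : nuclearNorm (rankOneSum d α β) ≤ ∑ k, d k :=
    nuclearNorm_rankOneSum_le d α β hd
      (fun k => (l2norm_le_one_iff (α k)).mp (hα k))
      (fun k => (l2norm_le_one_iff (β k)).mp (hβ k))
  calc G d0 α0 β0
      = F Zdag := by rw [hG, hF, ← hZeq, hsum]
    _ ≤ F (rankOneSum d α β) := hmin _
    _ ≤ G d α β := by
        rw [hF, hG]
        exact add_le_add_right (mul_le_mul_of_nonneg_left hNle hlam.le) _
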